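/- For every k ≥ 1, the sum of the entries of c_k equals √(r_k): Σ_{i=0}^{2^k−1} (c_k)_i = √(r_k). -/

import Mathlib

open Finset

/-- The silver ratio ρ = 1 + √2. -/
noncomputable def rho : ℝ := 1 + Real.sqrt 2

/-- Entry `i` of the silver stepsize schedule π^(k) ∈ ℝ^(2^k − 1) (0-indexed):
π^(1) = [√2], π^(k+1) = [π^(k), β_k, π^(k)] where β_k = 1 + ρ^(k−1). -/
noncomputable def piSilver : ℕ → ℕ → ℝ
  | 0, _ => 0
  | 1, _ => Real.sqrt 2
  | k + 2, i =>
      if i < 2 ^ (k + 1) - 1 then piSilver (k + 1) i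
      else if i = 2 ^ (k + 1) - 1 then 1 + rho ^ k
      else piSilver (k + 1) (i - 2 ^ (k + 1))

/-- The sequence r_k: r_1 = 4, r_{k+1} = (r_k + 4ρ^k + √(r_k(r_k + 8ρ^k)))/2. -/
noncomputable def rseq : ℕ → ℝ
  | 0 => 0
  | 1 => 4
  | k + 2 =>
      (rseq (k + 1) + 4 * rho ^ (k + 1)
        + Real.sqrt (rseq (k + 1) * (rseq (k + 1) + 8 * rho ^ (k + 1)))) / 2

/-- α_k = 1 + (√(r_k(r_k + 8ρ^k)) − r_k)/4. -/
noncomputable def alphaSeq (k : ℕ) : ℝ :=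
  1 + (Real.sqrt (rseq k * (rseq k + 8 * rho ^ k)) - rseq k) / 4

/-- Entry `i` of h_right^(k) ∈ ℝ^(2^k − 1) (0-indexed):
h_right^(1) = [3/2], h_right^(k+1) = [π^(k), α_k, h_right^(k)]. -/
noncomputable def hright : ℕ → ℕ → ℝ
  | 0, _ => 0
  | 1, _ => 3 / 2
  | k + 2, i =>
      if i < 2 ^ (k + 1) - 1 then piSilver (k + 1) i
      else if i = 2 ^ (k + 1) - 1 then alphaSeq (k + 1)
      else hright (k + 1) (i - 2 ^ (k + 1))

/-- h_left^(k) is h_right^(k) with its entries reversed. -/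
noncomputable def hleft (k i : ℕ) : ℝ := hright k (2 ^ k - 2 - i)

/-- Entry `i` of c_k ∈ ℝ^(2^k) (0-indexed): c_1 = (1,1),
c_{k+1} = [π^(k)/√r_{k+1}, β_{k+1}/√r_{k+1}, c_k] with β_{k+1} = 1 + ρ^k. -/
noncomputable def cvec : ℕ → ℕ → ℝ
  | 0, _ => 0
  | 1, _ => 1
  | k + 2, i =>
      if i < 2 ^ (k + 1) - 1 then piSilver (k + 1) i / Real.sqrt (rseq (k + 2))
      else if i = 2 ^ (k + 1) - 1 then (1 + rho ^ (k + 1)) / Real.sqrt (rseq (k + 2))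
      else cvec (k + 1) (i - 2 ^ (k + 1))

lemma rho_gt_one : (1:ℝ) < rho := by
  have : (1:ℝ) < Real.sqrt 2 := by
    rw [show (1:ℝ) = Real.sqrt 1 by simp]
    exact Real.sqrt_lt_sqrt (by norm_num) (by norm_num)
  unfold rho; linarith

lemma rho_pos : (0:ℝ) < rho := lt_trans one_pos rho_gt_one

lemma rho_sq : rho ^ 2 = 2 * rho + 1 := by
  have h : Real.sqrt 2 ^ 2 = 2 := Real.sq_sqrt (by norm_num)
  unfold rho; nlinarith [h]

/-- Sum of π^(k+1): ρ^(k+1) − 1. -/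
lemma piSum (k : ℕ) :
    ∑ i ∈ Finset.range (2 ^ (k + 1) - 1), piSilver (k + 1) i = rho ^ (k + 1) - 1 := by
  induction k with
  | zero =>
      simp [piSilver, rho]
  | succ k ih =>
      have hm : 1 ≤ 2 ^ (k + 1) := Nat.one_le_two_pow
      have hsplit : 2 ^ (k + 2) - 1 = 2 ^ (k + 1) + (2 ^ (k + 1) - 1) := by
        have : 2 ^ (k + 2) = 2 ^ (k + 1) + 2 ^ (k + 1) := by ring
        omega
      rw [hsplit, Finset.sum_range_add]
      have h1 : ∑ i ∈ Finset.range (2 ^ (k + 1)), piSilver (k + 2) i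
          = (rho ^ (k + 1) - 1) + (1 + rho ^ k) := by
        have hs : 2 ^ (k + 1) = (2 ^ (k + 1) - 1) + 1 := by omega
        rw [hs, Finset.sum_range_succ]
        congr 1
        · rw [← ih]
          apply Finset.sum_congr rfl
          intro i hi
          rw [Finset.mem_range] at hi
          simp only [piSilver, if_pos hi]
        · simp [piSilver]
      have h2 : ∑ i ∈ Finset.range (2 ^ (k + 1) - 1), piSilver (k + 2) (2 ^ (k + 1) + i)
          = rho ^ (k + 1) - 1 := by
        rw [← ih]
        apply Finset.sum_congr rfl
        intro i hi
        rw [Finset.mem_range] at hi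
        have h3 : ¬ (2 ^ (k + 1) + i < 2 ^ (k + 1) - 1) := by omega
        have h4 : ¬ (2 ^ (k + 1) + i = 2 ^ (k + 1) - 1) := by omega
        simp only [piSilver, if_neg h3, if_neg h4]
        congr 1
        omega
      rw [h1, h2]
      have := rho_sq
      have hpow : rho ^ (k + 2) = rho ^ k * rho ^ 2 := by ring
      rw [hpow, rho_sq]
      ring_nf

lemma rseq_pos (k : ℕ) (hk : 1 ≤ k) : 0 < rseq k := by
  match k, hk with
  | 1, _ => norm_num [rseq]
  | (k + 2), _ =>
      have h1 : 0 < rseq (k + 1) := rseq_pos (k + 1) le_add_self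
      have h2 : 0 < rho ^ (k + 1) := pow_pos rho_pos _
      have h3 : 0 ≤ Real.sqrt (rseq (k + 1) * (rseq (k + 1) + 8 * rho ^ (k + 1))) :=
        Real.sqrt_nonneg _
      show 0 < (rseq (k + 1) + 4 * rho ^ (k + 1) + _) / 2
      positivity

/-- The key identity: √(r_k · r_{k+1}) = r_{k+1} − 2ρ^k. -/
lemma sqrt_rr (k : ℕ) (hk : 1 ≤ k) :
    Real.sqrt (rseq k * rseq (k + 1)) = rseq (k + 1) - 2 * rho ^ k := by
  match k, hk with
  | (k + 1), _ =>
  set r := rseq (k + 1) with hr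
  have hrpos : 0 < r := rseq_pos (k + 1) le_add_self
  have hp : 0 < rho ^ (k + 1) := pow_pos rho_pos _
  set s := Real.sqrt (r * (r + 8 * rho ^ (k + 1))) with hs
  have hs0 : 0 ≤ s := Real.sqrt_nonneg _
  have hs2 : s ^ 2 = r * (r + 8 * rho ^ (k + 1)) := by
    rw [hs]; exact Real.sq_sqrt (by positivity)
  have hnext : rseq (k + 2) = (r + 4 * rho ^ (k + 1) + s) / 2 := rfl
  rw [hnext]
  have hge : (r + 4 * rho ^ (k + 1) + s) / 2 - 2 * rho ^ (k + 1) ≥ 0 := by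
    nlinarith
  rw [show r * ((r + 4 * rho ^ (k + 1) + s) / 2)
      = ((r + 4 * rho ^ (k + 1) + s) / 2 - 2 * rho ^ (k + 1)) ^ 2 by nlinarith]
  exact Real.sqrt_sq hge

/-- Main auxiliary: the statement for `k + 1`. -/
lemma cvec_sum_aux (k : ℕ) :
    ∑ i ∈ Finset.range (2 ^ (k + 1)), cvec (k + 1) i = Real.sqrt (rseq (k + 1)) := by
  induction k with
  | zero =>
      have : Real.sqrt (rseq 1) = 2 := by
        rw [show rseq 1 = 4 from rfl, show (4:ℝ) = 2 ^ 2 by norm_num,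
          Real.sqrt_sq (by norm_num)]
      rw [this]
      simp [cvec]
  | succ k ih =>
      have hm : 1 ≤ 2 ^ (k + 1) := Nat.one_le_two_pow
      have hrpos : 0 < rseq (k + 2) := rseq_pos (k + 2) (by omega)
      have hsq : 0 < Real.sqrt (rseq (k + 2)) := Real.sqrt_pos.mpr hrpos
      have hsplit : 2 ^ (k + 2) = 2 ^ (k + 1) + 2 ^ (k + 1) := by ring
      rw [hsplit, Finset.sum_range_add]
      have h1 : ∑ i ∈ Finset.range (2 ^ (k + 1)), cvec (k + 2) i
          = (2 * rho ^ (k + 1)) / Real.sqrt (rseq (k + 2)) := by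
        have hs : 2 ^ (k + 1) = (2 ^ (k + 1) - 1) + 1 := by omega
        rw [hs, Finset.sum_range_succ]
        have hA : ∑ i ∈ Finset.range (2 ^ (k + 1) - 1), cvec (k + 2) i
            = (rho ^ (k + 1) - 1) / Real.sqrt (rseq (k + 2)) := by
          rw [← piSum k, Finset.sum_div]
          apply Finset.sum_congr rfl
          intro i hi
          rw [Finset.mem_range] at hi
          simp only [cvec, if_pos hi]
        rw [hA]
        simp only [cvec, lt_irrefl, if_neg (lt_irrefl _), if_pos rfl, if_true, if_false]
        field_simp
        ring
      have h2 : ∑ i ∈ Finset.range (2 ^ (k + 1)), cvec (k + 2) (2 ^ (k + 1) + i)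
          = Real.sqrt (rseq (k + 1)) := by
        rw [← ih]
        apply Finset.sum_congr rfl
        intro i hi
        rw [Finset.mem_range] at hi
        have h3 : ¬ (2 ^ (k + 1) + i < 2 ^ (k + 1) - 1) := by omega
        have h4 : ¬ (2 ^ (k + 1) + i = 2 ^ (k + 1) - 1) := by omega
        simp only [cvec, if_neg h3, if_neg h4]
        congr 1
        omega
      rw [h1, h2]
      have hkey : Real.sqrt (rseq (k + 1) * rseq (k + 2))
          = rseq (k + 2) - 2 * rho ^ (k + 1) := sqrt_rr (k + 1) le_add_self
      have hr1 : 0 < rseq (k + 1) := rseq_pos (k + 1) le_add_self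
      have hmul : Real.sqrt (rseq (k + 1)) * Real.sqrt (rseq (k + 2))
          = rseq (k + 2) - 2 * rho ^ (k + 1) := by
        rw [← Real.sqrt_mul hr1.le]; exact hkey
      have hsqsq : Real.sqrt (rseq (k + 2)) * Real.sqrt (rseq (k + 2)) = rseq (k + 2) :=
        Real.mul_self_sqrt hrpos.le
      field_simp
      nlinarith [hmul, hsqsq]

/-- **Lemma.** For every `k ≥ 1`, `Σ_{i=0}^{2^k−1} (c_k)_i = √r_k`. -/
theorem cvec_sum (k : ℕ) (hk : 1 ≤ k) :
    ∑ i ∈ Finset.range (2 ^ k), cvec k i = Real.sqrt (rseq k) := by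
  obtain ⟨j, rfl⟩ := Nat.exists_eq_add_of_le hk
  rw [add_comm]
  exact cvec_sum_aux j
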